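/- Let C, C' ⊆ ℝⁿ be the interiors of rational polyhedral cones such that W := closure(C) ∩ closure(C') is a common codimension-one face, and assume closure(C) is strongly convex. Then there is at most one integral automorphism γ of ℝⁿ with γ(C) = C' fixing W pointwise. -/

import Mathlib

open Set

def IsRatPolyCone {n : ℕ} (σ : Set (Fin n → ℝ)) : Prop :=
  ∃ (m : ℕ) (v : Fin m → (Fin n → ℚ)),
    σ = {x | ∃ c : Fin m → ℝ, (∀ i, 0 ≤ c i) ∧
      x = ∑ i, c i • (fun j => ((v i j : ℝ)))}

def IsFaceOf {n : ℕ} (F C : Set (Fin n → ℝ)) : Prop :=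
  F ⊆ C ∧ Convex ℝ F ∧ (∀ c : ℝ, 0 ≤ c → ∀ x ∈ F, c • x ∈ F) ∧
    ∀ x ∈ C, ∀ y ∈ C, x + y ∈ F → x ∈ F ∧ y ∈ F

def IsIntegralAut {n : ℕ} (γ : (Fin n → ℝ) ≃ₗ[ℝ] (Fin n → ℝ)) : Prop :=
  (∀ x : Fin n → ℤ, ∃ y : Fin n → ℤ, γ (fun i => ((x i : ℝ))) = fun i => ((y i : ℝ))) ∧
  (∀ x : Fin n → ℤ, ∃ y : Fin n → ℤ, γ.symm (fun i => ((x i : ℝ))) = fun i => ((y i : ℝ)))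

lemma ratCone_zero {n : ℕ} {σ : Set (Fin n → ℝ)} (h : IsRatPolyCone σ) : (0 : Fin n → ℝ) ∈ σ := by
  obtain ⟨m, v, rfl⟩ := h
  exact ⟨0, fun i => le_refl 0, by simp⟩

lemma ratCone_smul {n : ℕ} {σ : Set (Fin n → ℝ)} (h : IsRatPolyCone σ) :
    ∀ t : ℝ, 0 ≤ t → ∀ x ∈ σ, t • x ∈ σ := by
  obtain ⟨m, v, rfl⟩ := h
  rintro t ht x ⟨c, hc, rfl⟩
  exact ⟨fun i => t * c i, fun i => mul_nonneg ht (hc i), by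
    rw [Finset.smul_sum]; simp [smul_smul]⟩

lemma ratCone_add {n : ℕ} {σ : Set (Fin n → ℝ)} (h : IsRatPolyCone σ) :
    ∀ x ∈ σ, ∀ y ∈ σ, x + y ∈ σ := by
  obtain ⟨m, v, rfl⟩ := h
  rintro x ⟨c, hc, rfl⟩ y ⟨d, hd, rfl⟩
  exact ⟨fun i => c i + d i, fun i => add_nonneg (hc i) (hd i), by
    simp [add_smul, Finset.sum_add_distrib]⟩

lemma ratCone_convex {n : ℕ} {σ : Set (Fin n → ℝ)} (h : IsRatPolyCone σ) : Convex ℝ σ := by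
  intro x hx y hy a b ha hb _
  exact ratCone_add h _ (ratCone_smul h a ha x hx) _ (ratCone_smul h b hb y hy)

/-- The closure of the interior of a convex set with nonempty interior contains the set. -/
lemma subset_closure_interior_of_convex {n : ℕ} {σ : Set (Fin n → ℝ)} (hconv : Convex ℝ σ)
    {v : Fin n → ℝ} (hv : v ∈ interior σ) : σ ⊆ closure (interior σ) := by
  intro x hx
  have htend : Filter.Tendsto (fun k : ℕ => x + (1 / (k + 1) : ℝ) • (v - x))
      Filter.atTop (nhds x) := by
    have h0 : Filter.Tendsto (fun k : ℕ => (1 / (k + 1) : ℝ)) Filter.atTop (nhds 0) :=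
      tendsto_one_div_add_atTop_nhds_zero_nat
    have := (h0.smul_const (v - x)).const_add x
    simpa using this
  refine mem_closure_of_tendsto htend (Filter.Eventually.of_forall fun k => ?_)
  exact hconv.add_smul_sub_mem_interior hx hv
    ⟨by positivity, by rw [div_le_one (by positivity)]; linarith [Nat.cast_nonneg (α := ℝ) k]⟩

set_option maxHeartbeats 2000000 in
theorem stmt2 {n : ℕ} (σ σ' : Set (Fin n → ℝ))
    (hσ : IsRatPolyCone σ) (hσ' : IsRatPolyCone σ')
    (C C' : Set (Fin n → ℝ)) (hC : C = interior σ) (hC' : C' = interior σ')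
    (hCne : C.Nonempty) (hC'ne : C'.Nonempty)
    (W : Set (Fin n → ℝ)) (hW : W = closure C ∩ closure C')
    (hWfaceC : IsFaceOf W (closure C)) (hWfaceC' : IsFaceOf W (closure C'))
    (hWcodim : Module.finrank ℝ (Submodule.span ℝ W) + 1 = n)
    -- `closure C` is strongly convex: it contains no nonzero linear subspace
    (hstrconv : ∀ x ∈ closure C, -x ∈ closure C → x = 0)
    (γ₁ γ₂ : (Fin n → ℝ) ≃ₗ[ℝ] (Fin n → ℝ))
    (hγ₁int : IsIntegralAut γ₁) (hγ₂int : IsIntegralAut γ₂)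
    (hγ₁C : γ₁ '' C = C') (hγ₂C : γ₂ '' C = C')
    (hγ₁W : ∀ w ∈ W, γ₁ w = w) (hγ₂W : ∀ w ∈ W, γ₂ w = w) :
    γ₁ = γ₂ := by
  obtain ⟨v₀, hv₀⟩ := hCne
  set H : Submodule ℝ (Fin n → ℝ) := Submodule.span ℝ W with hHdef
  -- closure C = closure σ and basic structure of closure C
  have hCcl : closure C = closure σ := by
    rw [hC]
    refine Subset.antisymm (closure_mono interior_subset) ?_
    rw [show closure (interior σ) = closure (closure (interior σ)) from (closure_closure).symm]
    refine closure_mono ?_ |>.trans subset_rfl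
    exact subset_closure_interior_of_convex (ratCone_convex hσ) (hC ▸ hv₀)
  have hσsubcl : σ ⊆ closure C := by
    rw [hCcl]; exact subset_closure
  have hSconv : Convex ℝ (closure C) := by
    rw [hCcl]; exact (ratCone_convex hσ).closure
  have hSsmul : ∀ t : ℝ, 0 ≤ t → ∀ x ∈ closure C, t • x ∈ closure C := by
    intro t ht x hx
    rw [hCcl] at hx ⊢
    have : Continuous fun y : Fin n → ℝ => t • y := continuous_const_smul t
    exact map_mem_closure this hx (fun y hy => ratCone_smul hσ t ht y hy)
  have hSadd : ∀ x ∈ closure C, ∀ y ∈ closure C, x + y ∈ closure C := by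
    intro x hx y hy
    rw [hCcl] at hx hy ⊢
    exact map_mem_closure₂ continuous_add hx hy (fun a ha b hb => ratCone_add hσ a ha b hb)
  have hWsubS : W ⊆ closure C := hWfaceC.1
  have hWsmul := hWfaceC.2.2.1
  have hWface := hWfaceC.2.2.2
  have hWsubH : W ⊆ (H : Set (Fin n → ℝ)) := Submodule.subset_span
  -- every element of H is a difference of two elements of W
  have hzeroW : (0 : Fin n → ℝ) ∈ W := by
    have h0 : (0 : Fin n → ℝ) ∈ closure C := hσsubcl (ratCone_zero hσ)
    have hC'cl : closure C' = closure σ' := by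
      rw [hC']
      refine Subset.antisymm (closure_mono interior_subset) ?_
      rw [show closure (interior σ') = closure (closure (interior σ')) from (closure_closure).symm]
      refine closure_mono ?_ |>.trans subset_rfl
      obtain ⟨v', hv'⟩ := hC'ne
      exact subset_closure_interior_of_convex (ratCone_convex hσ') (hC' ▸ hv')
    have h0' : (0 : Fin n → ℝ) ∈ closure C' := by
      rw [hC'cl]; exact subset_closure (ratCone_zero hσ')
    rw [hW]; exact ⟨h0, h0'⟩
  have hWadd : ∀ x ∈ W, ∀ y ∈ W, x + y ∈ W := by
    intro x hx y hy
    have := hWfaceC.2.1 hx hy (by norm_num : (0:ℝ) ≤ 1/2) (by norm_num : (0:ℝ) ≤ 1/2)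
      (by norm_num)
    have h2 := hWsmul 2 (by norm_num) _ this
    have : (2:ℝ) • ((1/2:ℝ) • x + (1/2:ℝ) • y) = x + y := by
      rw [smul_add, smul_smul, smul_smul]; norm_num
    rwa [this] at h2
  have hHdiff : ∀ x ∈ H, ∃ a ∈ W, ∃ b ∈ W, x = a - b := by
    have : H ≤ { carrier := {x | ∃ a ∈ W, ∃ b ∈ W, x = a - b}
                 add_mem' := by
                   rintro x y ⟨a, ha, b, hb, rfl⟩ ⟨a', ha', b', hb', rfl⟩
                   exact ⟨a + a', hWadd a ha a' ha', b + b', hWadd b hb b' hb', by abel⟩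
                 zero_mem' := ⟨0, hzeroW, 0, hzeroW, by simp⟩
                 smul_mem' := by
                   rintro r x ⟨a, ha, b, hb, rfl⟩
                   rcases le_or_gt 0 r with hr | hr
                   · exact ⟨r • a, hWsmul r hr a ha, r • b, hWsmul r hr b hb, by
                       rw [smul_sub]⟩
                   · exact ⟨(-r) • b, hWsmul (-r) (by linarith) b hb,
                       (-r) • a, hWsmul (-r) (by linarith) a ha, by
                       rw [smul_sub, neg_smul, neg_smul]; abel⟩ } := by
      rw [hHdef]
      exact Submodule.span_le.mpr (fun w hw => ⟨w, hw, 0, hzeroW, by simp⟩)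
    intro x hx
    exact this hx
  -- closure C ∩ H ⊆ W
  have hclH : ∀ x ∈ closure C, x ∈ H → x ∈ W := by
    intro x hx hxH
    obtain ⟨a, ha, b, hb, rfl⟩ := hHdiff x hxH
    have hsum : (a - b) + b ∈ W := by rwa [sub_add_cancel]
    exact (hWface _ hx _ (hWsubS hb) hsum).1
  -- C ∩ H = ∅
  have hCW : ∀ x ∈ C, x ∉ H := by
    intro x hx hxH
    have hxW : x ∈ W := hclH x (subset_closure hx) hxH
    -- get a ball around x inside σ
    rw [hC] at hx
    obtain ⟨ε, hε, hball⟩ := Metric.isOpen_iff.mp isOpen_interior x hx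
    have hballσ : Metric.ball x ε ⊆ σ := hball.trans interior_subset
    -- closure C ⊆ W
    have hσW : σ ⊆ W := by
      intro y hy
      set t : ℝ := ε / (2 * (‖y‖ + 1)) with ht
      have hypos : (0:ℝ) < ‖y‖ + 1 := by positivity
      have htpos : 0 < t := by positivity
      have hmem : x - t • y ∈ Metric.ball x ε := by
        rw [Metric.mem_ball, dist_eq_norm]
        have : x - t • y - x = -(t • y) := by abel
        rw [this, norm_neg, norm_smul, Real.norm_eq_abs, abs_of_pos htpos]
        calc t * ‖y‖ ≤ t * (‖y‖ + 1) := by nlinarith [norm_nonneg y]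
          _ = ε / 2 := by rw [ht, div_mul_eq_mul_div, mul_div_mul_right _ _ hypos.ne']
          _ < ε := by linarith
      have hsum : (x - t • y) + t • y ∈ W := by rwa [sub_add_cancel]
      have h1 : x - t • y ∈ closure C := hσsubcl (hballσ hmem)
      have h2 : t • y ∈ closure C := hσsubcl (ratCone_smul hσ t htpos.le y hy)
      have := (hWface _ h1 _ h2 hsum).2
      have := hWsmul t⁻¹ (by positivity) _ this
      rwa [smul_smul, inv_mul_cancel₀ htpos.ne', one_smul] at this
    -- so the ball is inside H, hence H = ⊤, contradiction with codim 1
    have hballH : Metric.ball x ε ⊆ (H : Set (Fin n → ℝ)) :=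
      fun y hy => hWsubH (hσW (hballσ hy))
    have hxH' : x ∈ H := hxH
    have hei : ∀ i : Fin n, (Pi.single i 1 : Fin n → ℝ) ∈ H := by
      intro i
      have h1 : x + (ε/2) • (Pi.single i 1 : Fin n → ℝ) ∈ Metric.ball x ε := by
        rw [Metric.mem_ball, dist_eq_norm]
        have : x + (ε/2) • (Pi.single i 1 : Fin n → ℝ) - x = (ε/2) • (Pi.single i 1 : Fin n → ℝ) := by abel
        rw [this, norm_smul, Real.norm_eq_abs, abs_of_pos (by linarith)]
        have hn : ‖(Pi.single i 1 : Fin n → ℝ)‖ ≤ 1 := by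
          rw [pi_norm_le_iff_of_nonneg zero_le_one]
          intro j
          rcases eq_or_ne j i with rfl | hji
          · simp
          · simp [Pi.single_apply, hji]
        nlinarith
      have h2 : x + (ε/2) • (Pi.single i 1 : Fin n → ℝ) ∈ H := hballH h1
      have h3 : (ε/2) • (Pi.single i 1 : Fin n → ℝ) ∈ H := by
        have := H.sub_mem h2 hxH'
        simpa using this
      have := H.smul_mem (ε/2)⁻¹ h3
      rwa [smul_smul, inv_mul_cancel₀ (by positivity : (ε/2 : ℝ) ≠ 0), one_smul] at this
    have hHtop : H = ⊤ := by
      rw [eq_top_iff, ← (Pi.basisFun ℝ (Fin n)).span_eq, Submodule.span_le]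
      rintro _ ⟨i, rfl⟩
      simpa [Pi.basisFun_apply] using hei i
    rw [hHtop] at hWcodim
    rw [finrank_top] at hWcodim
    simp [Module.finrank_pi] at hWcodim
  -- define δ = γ₂⁻¹ ∘ γ₁ and reduce to δ = id
  set δ : (Fin n → ℝ) ≃ₗ[ℝ] (Fin n → ℝ) := γ₁.trans γ₂.symm with hδdef
  have hδapp : ∀ x, δ x = γ₂.symm (γ₁ x) := fun x => rfl
  have hδsymmapp : ∀ x, δ.symm x = γ₁.symm (γ₂ x) := fun x => rfl
  have hδγ : ∀ x, γ₂.symm (γ₁ x) = x → γ₁ x = γ₂ x := fun x hx =>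
    (LinearEquiv.symm_apply_eq γ₂).mp hx
  clear_value δ
  clear hδdef
  have himg : ∀ (γ : (Fin n → ℝ) ≃ₗ[ℝ] (Fin n → ℝ)), γ '' C = C' → γ.symm '' C' = C := by
    intro γ hγ
    rw [← hγ, Set.image_image]
    simp
  have hδC : ∀ x ∈ C, δ x ∈ C := by
    intro x hx
    have h1 : γ₁ x ∈ C' := hγ₁C ▸ mem_image_of_mem _ hx
    have h2 : γ₂.symm (γ₁ x) ∈ γ₂.symm '' C' := mem_image_of_mem _ h1
    rw [himg γ₂ hγ₂C] at h2
    rwa [hδapp x]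
  have hδsymmC : ∀ x ∈ C, δ.symm x ∈ C := by
    intro x hx
    have h1 : γ₂ x ∈ C' := hγ₂C ▸ mem_image_of_mem _ hx
    have h2 : γ₁.symm (γ₂ x) ∈ γ₁.symm '' C' := mem_image_of_mem _ h1
    rw [himg γ₁ hγ₁C] at h2
    rwa [hδsymmapp x]
  have hδW : ∀ w ∈ W, δ w = w := by
    intro w hw
    rw [hδapp, hγ₁W w hw]
    exact (LinearEquiv.symm_apply_eq γ₂).mpr (hγ₂W w hw).symm
  have hδH : ∀ x ∈ H, δ x = x := by
    intro x hx
    rw [hHdef] at hx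
    induction hx using Submodule.span_induction with
    | mem w hw => exact hδW w hw
    | zero => exact map_zero δ
    | add a b _ _ ha hb => rw [map_add, ha, hb]
    | smul r a _ ha => rw [map_smul, ha]
  have hδsymmH : ∀ x ∈ H, δ.symm x = x := by
    intro x hx
    have h1 := congrArg δ.symm (hδH x hx)
    rw [LinearEquiv.symm_apply_apply] at h1
    exact h1.symm
  -- set up the projection functional c along H
  have hv₀H : v₀ ∉ H := hCW v₀ hv₀
  have hv₀ne : v₀ ≠ 0 := fun h => hv₀H (h ▸ H.zero_mem)
  set K : Submodule ℝ (Fin n → ℝ) := ℝ ∙ v₀ with hKdef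
  have hdisj : Disjoint H K := (Submodule.disjoint_span_singleton' hv₀ne).mpr hv₀H
  have hsup : H ⊔ K = ⊤ := by
    apply Submodule.eq_top_of_finrank_eq
    have h1 := Submodule.finrank_sup_add_finrank_inf_eq H K
    rw [hdisj.eq_bot, finrank_bot, add_zero, finrank_span_singleton hv₀ne] at h1
    have h2 : Module.finrank ℝ (Fin n → ℝ) = n := by
      simp [Module.finrank_pi]
    omega
  have hcompl : IsCompl K H := ⟨hdisj.symm, codisjoint_iff.mpr (by rwa [sup_comm])⟩
  obtain ⟨proj, hprojdef⟩ : ∃ p : (Fin n → ℝ) →ₗ[ℝ] K,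
      p = Submodule.projectionOnto K H hcompl := ⟨_, rfl⟩
  obtain ⟨c, hcdef⟩ : ∃ c : (Fin n → ℝ) →ₗ[ℝ] ℝ,
      c = (LinearEquiv.coord ℝ (Fin n → ℝ) v₀ hv₀ne).toLinearMap.comp proj := ⟨_, rfl⟩
  have hcv₀ : c v₀ = 1 := by
    have h1 : proj v₀ = ⟨v₀, Submodule.mem_span_singleton_self v₀⟩ := by
      rw [hprojdef]
      exact Submodule.projectionOnto_apply_left hcompl
        ⟨v₀, Submodule.mem_span_singleton_self v₀⟩
    rw [hcdef]
    simp only [LinearMap.coe_comp, Function.comp_apply, LinearEquiv.coe_coe, h1]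
    exact LinearEquiv.coord_self ℝ (Fin n → ℝ) v₀ hv₀ne
  have hker : ∀ x, c x = 0 → x ∈ H := by
    intro x hx
    rw [hcdef] at hx
    have h1 : proj x = 0 := by
      apply (LinearEquiv.coord ℝ (Fin n → ℝ) v₀ hv₀ne).injective
      rw [map_zero]
      exact hx
    have h2 : x ∈ LinearMap.ker proj := LinearMap.mem_ker.mpr h1
    rwa [hprojdef, Submodule.ker_projectionOnto] at h2
  -- the key identity for linear maps fixing H
  have ident : ∀ (θ : (Fin n → ℝ) →ₗ[ℝ] (Fin n → ℝ)), (∀ x ∈ H, θ x = x) →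
      ∀ x, θ x = x + c x • (θ v₀ - v₀) := by
    intro θ hθ x
    have hxH : x - c x • v₀ ∈ H := by
      apply hker
      rw [map_sub, map_smul, hcv₀, smul_eq_mul, mul_one, sub_self]
    have h1 : θ x = θ (x - c x • v₀) + c x • θ v₀ := by
      rw [← map_smul, ← map_add]
      congr 1
      abel
    rw [h1, hθ _ hxH, smul_sub]
    abel
  -- integrality: c (θ v₀) is an integer for integral θ fixing H
  have traceZ : ∀ (θ : (Fin n → ℝ) →ₗ[ℝ] (Fin n → ℝ)), (∀ x ∈ H, θ x = x) →
      (∀ x : Fin n → ℤ, ∃ y : Fin n → ℤ, θ (fun i => ((x i : ℝ))) = fun i => ((y i : ℝ))) →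
      ∃ m : ℤ, c (θ v₀) = (m : ℝ) := by
    intro θ hθ hint
    have hsingle : ∀ i : Fin n, ∃ y : Fin n → ℤ,
        θ (Pi.single i (1:ℝ)) = fun j => ((y j : ℝ)) := by
      intro i
      obtain ⟨y, hy⟩ := hint (Pi.single i 1)
      refine ⟨y, ?_⟩
      rw [← hy]
      congr 1
      funext j
      by_cases hji : j = i
      · subst hji; simp
      · simp [Pi.single_apply, hji]
    choose Y hY using hsingle
    have hcu : ∀ i : Fin n, θ (Pi.single i (1:ℝ)) i
        = 1 + (θ v₀ - v₀) i * c (Pi.single i (1:ℝ)) := by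
      intro i
      rw [ident θ hθ (Pi.single i 1)]
      rw [Pi.add_apply, Pi.smul_apply, smul_eq_mul, Pi.single_eq_same, mul_comm]
    have hrep : ∀ w : Fin n → ℝ, c w = ∑ i, w i * c (Pi.single i (1:ℝ)) := by
      intro w
      have hwrep : w = ∑ i, w i • (Pi.single i 1 : Fin n → ℝ) := by
        funext j
        rw [Finset.sum_apply]
        simp [Pi.single_apply]
      conv_lhs => rw [hwrep]
      rw [map_sum]
      exact Finset.sum_congr rfl (fun i _ => by rw [map_smul, smul_eq_mul])
    have hsum1 : ∑ i, θ (Pi.single i (1:ℝ)) i = (n : ℝ) + (c (θ v₀) - 1) := by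
      rw [Finset.sum_congr rfl (fun i _ => hcu i), Finset.sum_add_distrib]
      congr 1
      · simp
      · rw [← hrep (θ v₀ - v₀), map_sub, hcv₀]
    have hsum2 : ∑ i, θ (Pi.single i (1:ℝ)) i = ((∑ i, Y i i : ℤ) : ℝ) := by
      push_cast
      exact Finset.sum_congr rfl (fun i _ => by rw [hY i])
    refine ⟨(∑ i, Y i i) - n + 1, ?_⟩
    have h3 := hsum2.symm.trans hsum1
    push_cast at h3 ⊢
    linarith
  -- integrality of δ and δ.symm
  have hδint : ∀ x : Fin n → ℤ, ∃ y : Fin n → ℤ,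
      δ.toLinearMap (fun i => ((x i : ℝ))) = fun i => ((y i : ℝ)) := by
    intro x
    obtain ⟨y1, hy1⟩ := hγ₁int.1 x
    obtain ⟨y2, hy2⟩ := hγ₂int.2 y1
    exact ⟨y2, by simp only [LinearEquiv.coe_coe, hδapp, hy1, hy2]⟩
  have hδsymmint : ∀ x : Fin n → ℤ, ∃ y : Fin n → ℤ,
      δ.symm.toLinearMap (fun i => ((x i : ℝ))) = fun i => ((y i : ℝ)) := by
    intro x
    obtain ⟨y1, hy1⟩ := hγ₂int.1 x
    obtain ⟨y2, hy2⟩ := hγ₁int.2 y1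
    exact ⟨y2, by simp only [LinearEquiv.coe_coe, hδsymmapp, hy1, hy2]⟩
  have hδH' : ∀ x ∈ H, δ.toLinearMap x = x := hδH
  have hδsymmH' : ∀ x ∈ H, δ.symm.toLinearMap x = x := hδsymmH
  obtain ⟨a, ha⟩ := traceZ δ.toLinearMap hδH' hδint
  obtain ⟨b, hb⟩ := traceZ δ.symm.toLinearMap hδsymmH' hδsymmint
  simp only [LinearEquiv.coe_coe] at ha hb
  -- the product of the two eigenvalues is 1
  have hmul : c (δ.symm v₀) * c (δ v₀) = 1 := by
    have h1 := ident δ.toLinearMap hδH' (δ.symm v₀)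
    simp only [LinearEquiv.coe_coe] at h1
    rw [LinearEquiv.apply_symm_apply] at h1
    have h2 := congrArg c h1
    rw [hcv₀, map_add, map_smul, smul_eq_mul, map_sub, hcv₀] at h2
    linear_combination -h2
  -- positivity of the eigenvalue of δ
  have hlampos : 0 < c (δ v₀) := by
    by_contra hneg
    push_neg at hneg
    have hδv₀C : δ v₀ ∈ C := hδC v₀ hv₀
    have hy : (-(c (δ v₀))) • v₀ ∈ closure C :=
      hSsmul _ (by linarith) _ (subset_closure hv₀)
    have hsum_mem : δ v₀ + (-(c (δ v₀))) • v₀ ∈ closure C :=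
      hSadd _ (subset_closure hδv₀C) _ hy
    have hsumH : δ v₀ + (-(c (δ v₀))) • v₀ ∈ H := by
      apply hker
      rw [map_add, map_smul, hcv₀, smul_eq_mul, mul_one]
      ring
    have hsumW := hclH _ hsum_mem hsumH
    have hmem := (hWface _ (subset_closure hδv₀C) _ hy hsumW).1
    exact hCW _ hδv₀C (hWsubH hmem)
  -- conclude c (δ v₀) = 1
  have hlam1 : c (δ v₀) = 1 := by
    have hab : b * a = 1 := by
      have h1 := hmul
      rw [ha, hb] at h1
      exact_mod_cast h1
    rcases Int.eq_one_or_neg_one_of_mul_eq_one' hab with ⟨_, ha1⟩ | ⟨_, ha1⟩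
    · rw [ha, ha1]; norm_num
    · rw [ha, ha1] at hlampos
      norm_num at hlampos
  -- the translation part hvec
  obtain ⟨hvec, hhdef⟩ : ∃ u : Fin n → ℝ, u = δ v₀ - v₀ := ⟨_, rfl⟩
  have hhH : hvec ∈ H := by
    apply hker
    rw [hhdef, map_sub, hlam1, hcv₀, sub_self]
  have hδv₀eq : δ v₀ = v₀ + hvec := by rw [hhdef]; abel
  have hδh : δ hvec = hvec := hδH hvec hhH
  have hδsymmh : δ.symm (-hvec) = -hvec := by
    rw [map_neg, hδsymmH hvec hhH]
  have hδsymmv : δ.symm v₀ = v₀ + (-hvec) := by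
    have h1 : δ (v₀ + (-hvec)) = v₀ := by
      rw [map_add, map_neg, hδh, hδv₀eq]
      exact add_neg_cancel_right v₀ hvec
    have h2 := congrArg δ.symm h1
    rw [LinearEquiv.symm_apply_apply] at h2
    exact h2.symm
  -- key limiting argument
  have key : ∀ (θ : (Fin n → ℝ) →ₗ[ℝ] (Fin n → ℝ)) (u : Fin n → ℝ),
      (∀ x ∈ C, θ x ∈ C) → θ u = u → θ v₀ = v₀ + u → u ∈ closure C := by
    intro θ u hθC hθu hθv
    have hiter : ∀ k : ℕ, v₀ + (k : ℝ) • u ∈ C := by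
      intro k
      induction k with
      | zero => simpa using hv₀
      | succ k ih =>
        have hmem := hθC _ ih
        have heq : θ (v₀ + (k:ℝ) • u) = v₀ + ((k+1 : ℕ):ℝ) • u := by
          rw [map_add, map_smul, hθu, hθv]
          push_cast
          rw [add_smul, one_smul]
          abel
        rwa [heq] at hmem
    have hmem : ∀ k : ℕ, u + (1/((k:ℝ)+1)) • (v₀ - u) ∈ closure C := by
      intro k
      have h1 := hSsmul (1/((k:ℝ)+1)) (by positivity) _ (subset_closure (hiter k))
      have heq : (1/((k:ℝ)+1)) • (v₀ + (k:ℝ) • u) = u + (1/((k:ℝ)+1)) • (v₀ - u) := by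
        have hk : ((k:ℝ)+1) ≠ 0 := by positivity
        rw [smul_add, smul_smul, smul_sub]
        rw [show (1/((k:ℝ)+1)) * k = 1 - 1/((k:ℝ)+1) by field_simp; ring]
        rw [sub_smul, one_smul]
        abel
      rwa [heq] at h1
    have htend : Filter.Tendsto (fun k : ℕ => u + (1/((k:ℝ)+1)) • (v₀ - u))
        Filter.atTop (nhds u) := by
      have h0 : Filter.Tendsto (fun k : ℕ => (1 / (k + 1) : ℝ)) Filter.atTop (nhds 0) :=
        tendsto_one_div_add_atTop_nhds_zero_nat
      have h1 := (h0.smul_const (v₀ - u)).const_add u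
      simpa using h1
    exact isClosed_closure.mem_of_tendsto htend (Filter.Eventually.of_forall hmem)
  have hδC' : ∀ x ∈ C, δ.toLinearMap x ∈ C := hδC
  have hδsymmC' : ∀ x ∈ C, δ.symm.toLinearMap x ∈ C := hδsymmC
  have hh1 : hvec ∈ closure C := key δ.toLinearMap hvec hδC' hδh hδv₀eq
  have hh2 : -hvec ∈ closure C := key δ.symm.toLinearMap (-hvec) hδsymmC' hδsymmh hδsymmv
  have hh0 : hvec = 0 := hstrconv hvec hh1 hh2
  have hδv₀ : δ v₀ = v₀ := by rw [hδv₀eq, hh0, add_zero]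
  -- conclude δ = id and γ₁ = γ₂
  have hδid : ∀ x, δ x = x := by
    intro x
    have h1 := ident δ.toLinearMap hδH' x
    simp only [LinearEquiv.coe_coe] at h1
    rw [hδv₀, sub_self, smul_zero, add_zero] at h1
    exact h1
  refine LinearEquiv.ext fun x => ?_
  exact hδγ x ((hδapp x) ▸ hδid x)
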